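/- For every integer n ≥ 1 and every real h with 0 ≤ h ≤ l_n, the infimum of Γ_{nm}(h) over integers m ≥ 1 is attained, and it equals the minimum of Γ_{nm}(h) over integers m with A_n(h) ≤ m ≤ B_n(h). -/

import Mathlib

/-- For a real number `x`, its positive part `x₊ = max {x, 0}`. -/
noncomputable def ppart (x : ℝ) : ℝ := max x 0

/-- `Δ(k) = e^{-l_k} + e^{-l_{k+1}} + e^{-(1/2)(l_k + l_{k+1} - r_k)₊} + (r_k - l_k - l_{k+1})₊`. -/
noncomputable def DeltaF (l r : ℕ → ℝ) (k : ℕ) : ℝ :=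
  Real.exp (-l k) + Real.exp (-l (k + 1)) +
    Real.exp (-(1/2) * ppart (l k + l (k + 1) - r k)) + ppart (r k - l k - l (k + 1))

/-- The function `Γ_{nm}(h)` associated to the sequences `{l_n}` and `{r_n}`. -/
noncomputable def GammaF (l r : ℕ → ℝ) (n m : ℕ) (h : ℝ) : ℝ :=
  if m < n then
    (if l m ≤ h then
      ppart (r m + h - l (m + 1)) + Real.exp h * ∑ k ∈ Finset.Icc (m + 1) (n - 1), DeltaF l r k
    else
      l m - h + Real.exp h * ∑ k ∈ Finset.Icc m (n - 1), DeltaF l r k)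
  else if m = n then min h (l n - h)
  else
    (if l m ≤ h then
      ppart (r (m - 1) + h - l (m - 1)) + Real.exp h * ∑ k ∈ Finset.Icc n (m - 2), DeltaF l r k
    else
      l m - h + Real.exp h * ∑ k ∈ Finset.Icc n (m - 1), DeltaF l r k)

/-- `A_n(h)`: the largest positive integer `m < n` with `l_m ≤ h`, or `1` if there is none. -/
noncomputable def AFun (l : ℕ → ℝ) (n : ℕ) (h : ℝ) : ℕ :=
  sSup ({1} ∪ {m : ℕ | 1 ≤ m ∧ m < n ∧ l m ≤ h})

/-- `B_n(h)`: the smallest integer `m > n` with `l_m ≤ h`, or `∞` if there is none. -/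
noncomputable def BFun (l : ℕ → ℝ) (n : ℕ) (h : ℝ) : ℕ∞ :=
  sInf {x : ℕ∞ | ∃ m : ℕ, x = (m : ℕ∞) ∧ n < m ∧ l m ≤ h}

/-- `inf_{m ≥ 1} Γ_{nm}(h)`. -/
noncomputable def infGammaF (l r : ℕ → ℝ) (n : ℕ) (h : ℝ) : ℝ :=
  sInf {x : ℝ | ∃ m : ℕ, 1 ≤ m ∧ x = GammaF l r n m h}

/-- The set whose supremum is `K = sup_{n ≥ 1} sup_{h ∈ [0, l_n]} inf_{m ≥ 1} Γ_{nm}(h)`. -/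
def KSetF (l r : ℕ → ℝ) : Set ℝ :=
  {x : ℝ | ∃ n : ℕ, 1 ≤ n ∧ ∃ h : ℝ, 0 ≤ h ∧ h ≤ l n ∧ x = infGammaF l r n h}

lemma ppart_nonneg (x : ℝ) : 0 ≤ ppart x := le_max_right x 0

lemma deltaF_nonneg (l r : ℕ → ℝ) (k : ℕ) : 0 ≤ DeltaF l r k := by
  unfold DeltaF
  have h1 := Real.exp_pos (-l k)
  have h2 := Real.exp_pos (-l (k+1))
  have h3 := Real.exp_pos (-(1/2) * ppart (l k + l (k + 1) - r k))
  have h4 := ppart_nonneg (r k - l k - l (k + 1))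
  linarith

lemma exp_le_deltaF (l r : ℕ → ℝ) (k : ℕ) : Real.exp (-l k) ≤ DeltaF l r k := by
  unfold DeltaF
  have h2 := Real.exp_pos (-l (k+1))
  have h3 := Real.exp_pos (-(1/2) * ppart (l k + l (k + 1) - r k))
  have h4 := ppart_nonneg (r k - l k - l (k + 1))
  linarith

lemma two_mul_le_exp (x : ℝ) (hx : 0 ≤ x) : 2 * x ≤ Real.exp x := by
  have h1 := Real.add_one_le_exp (x/2)
  have h2 : Real.exp x = Real.exp (x/2) * Real.exp (x/2) := by
    rw [← Real.exp_add]; ring_nf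
  nlinarith [Real.exp_pos (x/2), sq_nonneg (x/2 - 1)]

lemma key_ineq (h a b ρ : ℝ) (h0 : 0 ≤ h) (ha : a ≤ h) :
    ppart (ρ + h - b) ≤ Real.exp h *
      (Real.exp (-a) + Real.exp (-b) + Real.exp (-(1/2) * ppart (a + b - ρ)) + ppart (ρ - a - b)) := by
  have hpp : (0:ℝ) ≤ ppart (ρ - a - b) := ppart_nonneg _
  have hea := Real.exp_pos (-a)
  have heb := Real.exp_pos (-b)
  have heh := Real.exp_pos h
  have hec := Real.exp_pos (-(1/2) * ppart (a + b - ρ))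
  rcases le_or_gt (ρ + h - b) 0 with hle | hgt
  · rw [show ppart (ρ + h - b) = 0 from max_eq_right hle]
    nlinarith
  · rw [show ppart (ρ + h - b) = ρ + h - b from max_eq_left hgt.le]
    rcases le_or_gt (a + b) ρ with hc | hc
    · rw [show ppart (a + b - ρ) = 0 from max_eq_right (by linarith),
          show ppart (ρ - a - b) = ρ - a - b from max_eq_left (by linarith)]
      have h2 : 2 * h ≤ Real.exp h := two_mul_le_exp h h0
      have h1 : (1:ℝ) ≤ Real.exp h := Real.one_le_exp h0
      have h5 : Real.exp (-(1/2) * (0:ℝ)) = 1 := by norm_num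
      rw [h5]
      nlinarith [mul_nonneg (sub_nonneg.mpr h1) (show (0:ℝ) ≤ ρ - a - b by linarith)]
    · rw [show ppart (ρ - a - b) = 0 from max_eq_right (by linarith),
          show ppart (a + b - ρ) = a + b - ρ from max_eq_left (by linarith)]
      have key2 : ρ + h - b ≤ Real.exp h * Real.exp (-(1/2) * (a + b - ρ)) := by
        rw [← Real.exp_add]
        have h5 : ρ + h - b ≤ Real.exp ((ρ + h - b)/2) := by
          have := two_mul_le_exp ((ρ + h - b)/2) (by linarith)
          linarith
        have h6 : Real.exp ((ρ + h - b)/2) ≤ Real.exp (h + -(1/2) * (a + b - ρ)) :=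
          Real.exp_le_exp.mpr (by linarith)
        linarith
      nlinarith [mul_pos heh hea, mul_pos heh heb]

lemma sum_split_left (f : ℕ → ℝ) (a c : ℕ) (hac : a ≤ c) :
    ∑ k ∈ Finset.Icc a c, f k = f a + ∑ k ∈ Finset.Icc (a + 1) c, f k := by
  rw [Finset.Icc_add_one_left_eq_Ioc, ← Finset.Icc_erase_left,
    Finset.add_sum_erase _ f (Finset.mem_Icc.mpr ⟨le_refl a, hac⟩)]

lemma gamma_left (l r : ℕ → ℝ) (n A m : ℕ) (h : ℝ) (h0 : 0 ≤ h)
    (hA : l A ≤ h) (hAn : A < n) (hm : m < A) :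
    GammaF l r n A h ≤ GammaF l r n m h := by
  have hkey : ppart (r A + h - l (A + 1)) ≤ Real.exp h * DeltaF l r A := by
    have := key_ineq h (l A) (l (A + 1)) (r A) h0 hA
    unfold DeltaF
    exact this
  have hsplit : ∑ k ∈ Finset.Icc A (n - 1), DeltaF l r k
      = DeltaF l r A + ∑ k ∈ Finset.Icc (A + 1) (n - 1), DeltaF l r k :=
    sum_split_left _ _ _ (by omega)
  have hΓA : GammaF l r n A h = ppart (r A + h - l (A + 1)) +
      Real.exp h * ∑ k ∈ Finset.Icc (A + 1) (n - 1), DeltaF l r k := by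
    simp only [GammaF]; rw [if_pos hAn, if_pos hA]
  rw [hΓA]
  simp only [GammaF]
  rw [if_pos (show m < n by omega)]
  by_cases hlm : l m ≤ h
  · rw [if_pos hlm]
    have hsub : ∑ k ∈ Finset.Icc A (n - 1), DeltaF l r k ≤
        ∑ k ∈ Finset.Icc (m + 1) (n - 1), DeltaF l r k :=
      Finset.sum_le_sum_of_subset_of_nonneg (Finset.Icc_subset_Icc (by omega) le_rfl)
        (fun k _ _ => deltaF_nonneg l r k)
    rw [hsplit] at hsub
    have hmul := mul_le_mul_of_nonneg_left hsub (Real.exp_pos h).le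
    rw [mul_add] at hmul
    linarith [ppart_nonneg (r m + h - l (m + 1))]
  · rw [if_neg hlm]
    have hsub : ∑ k ∈ Finset.Icc A (n - 1), DeltaF l r k ≤
        ∑ k ∈ Finset.Icc m (n - 1), DeltaF l r k :=
      Finset.sum_le_sum_of_subset_of_nonneg (Finset.Icc_subset_Icc (by omega) le_rfl)
        (fun k _ _ => deltaF_nonneg l r k)
    rw [hsplit] at hsub
    have hmul := mul_le_mul_of_nonneg_left hsub (Real.exp_pos h).le
    rw [mul_add] at hmul
    have : ¬ l m ≤ h := hlm
    linarith [not_le.mp hlm]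

lemma gamma_right (l r : ℕ → ℝ) (n b m : ℕ) (h : ℝ) (h0 : 0 ≤ h) (hn : 1 ≤ n)
    (hb : l b ≤ h) (hnb : n < b) (hm : b < m) :
    GammaF l r n b h ≤ GammaF l r n m h := by
  have hb1 : b - 1 + 1 = b := by omega
  have hkey : ppart (r (b - 1) + h - l (b - 1)) ≤ Real.exp h * DeltaF l r (b - 1) := by
    have hk := key_ineq h (l b) (l (b - 1)) (r (b - 1)) h0 hb
    unfold DeltaF
    rw [hb1,
      show l (b - 1) + l b - r (b - 1) = l b + l (b - 1) - r (b - 1) from by ring,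
      show r (b - 1) - l (b - 1) - l b = r (b - 1) - l b - l (b - 1) from by ring]
    calc ppart (r (b - 1) + h - l (b - 1)) ≤
        Real.exp h * (Real.exp (-l b) + Real.exp (-l (b - 1)) +
          Real.exp (-(1/2) * ppart (l b + l (b - 1) - r (b - 1))) +
          ppart (r (b - 1) - l b - l (b - 1))) := hk
      _ = Real.exp h * (Real.exp (-l (b - 1)) + Real.exp (-l b) +
          Real.exp (-(1/2) * ppart (l b + l (b - 1) - r (b - 1))) +
          ppart (r (b - 1) - l b - l (b - 1))) := by ring
  have hsplit : ∑ k ∈ Finset.Icc n (b - 1), DeltaF l r k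
      = ∑ k ∈ Finset.Icc n (b - 2), DeltaF l r k + DeltaF l r (b - 1) := by
    have hb2 : b - 1 = (b - 2) + 1 := by omega
    rw [hb2, Finset.sum_Icc_succ_top (by omega), ← hb2]
  have hΓb : GammaF l r n b h = ppart (r (b - 1) + h - l (b - 1)) +
      Real.exp h * ∑ k ∈ Finset.Icc n (b - 2), DeltaF l r k := by
    simp only [GammaF]; rw [if_neg (by omega : ¬ b < n), if_neg (by omega : ¬ b = n), if_pos hb]
  rw [hΓb]
  simp only [GammaF]
  rw [if_neg (show ¬ m < n by omega), if_neg (show ¬ m = n by omega)]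
  by_cases hlm : l m ≤ h
  · rw [if_pos hlm]
    have hsub : ∑ k ∈ Finset.Icc n (b - 1), DeltaF l r k ≤
        ∑ k ∈ Finset.Icc n (m - 2), DeltaF l r k :=
      Finset.sum_le_sum_of_subset_of_nonneg (Finset.Icc_subset_Icc le_rfl (by omega))
        (fun k _ _ => deltaF_nonneg l r k)
    rw [hsplit] at hsub
    have hmul := mul_le_mul_of_nonneg_left hsub (Real.exp_pos h).le
    rw [mul_add] at hmul
    linarith [ppart_nonneg (r (m - 1) + h - l (m - 1))]
  · rw [if_neg hlm]
    have hsub : ∑ k ∈ Finset.Icc n (b - 1), DeltaF l r k ≤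
        ∑ k ∈ Finset.Icc n (m - 1), DeltaF l r k :=
      Finset.sum_le_sum_of_subset_of_nonneg (Finset.Icc_subset_Icc le_rfl (by omega))
        (fun k _ _ => deltaF_nonneg l r k)
    rw [hsplit] at hsub
    have hmul := mul_le_mul_of_nonneg_left hsub (Real.exp_pos h).le
    rw [mul_add] at hmul
    linarith [not_le.mp hlm]

lemma gamma_lb (l r : ℕ → ℝ) (n m : ℕ) (h : ℝ) (h0 : 0 ≤ h) (hm : n + 1 ≤ m) :
    min (l m - h) 0 + ∑ k ∈ Finset.Icc n (m - 2), Real.exp (-l k) ≤ GammaF l r n m h := by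
  have hsums : ∀ c : ℕ, ∑ k ∈ Finset.Icc n c, Real.exp (-l k) ≤
      Real.exp h * ∑ k ∈ Finset.Icc n c, DeltaF l r k := by
    intro c
    calc ∑ k ∈ Finset.Icc n c, Real.exp (-l k) ≤ ∑ k ∈ Finset.Icc n c, DeltaF l r k :=
          Finset.sum_le_sum (fun k _ => exp_le_deltaF l r k)
      _ = 1 * ∑ k ∈ Finset.Icc n c, DeltaF l r k := (one_mul _).symm
      _ ≤ Real.exp h * ∑ k ∈ Finset.Icc n c, DeltaF l r k :=
          mul_le_mul_of_nonneg_right (Real.one_le_exp h0)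
            (Finset.sum_nonneg fun k _ => deltaF_nonneg l r k)
  simp only [GammaF]
  rw [if_neg (show ¬ m < n by omega), if_neg (show ¬ m = n by omega)]
  by_cases hlm : l m ≤ h
  · rw [if_pos hlm]
    have h1 := hsums (m - 2)
    have h2 : min (l m - h) 0 ≤ 0 := min_le_right _ _
    linarith [ppart_nonneg (r (m - 1) + h - l (m - 1))]
  · rw [if_neg hlm]
    have h1 := hsums (m - 1)
    have h2 : ∑ k ∈ Finset.Icc n (m - 2), Real.exp (-l k) ≤
        ∑ k ∈ Finset.Icc n (m - 1), Real.exp (-l k) :=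
      Finset.sum_le_sum_of_subset_of_nonneg (Finset.Icc_subset_Icc le_rfl (by omega))
        (fun k _ _ => (Real.exp_pos _).le)
    have h3 : min (l m - h) 0 ≤ 0 := min_le_right _ _
    linarith [not_le.mp hlm]

lemma gamma_lb2 (l r : ℕ → ℝ) (n m : ℕ) (h : ℝ) (hm : n + 1 ≤ m) (hlm : h < l m) :
    l m - h ≤ GammaF l r n m h := by
  simp only [GammaF]
  rw [if_neg (show ¬ m < n by omega), if_neg (show ¬ m = n by omega), if_neg (not_le.mpr hlm)]
  have : (0:ℝ) ≤ Real.exp h * ∑ k ∈ Finset.Icc n (m - 1), DeltaF l r k :=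
    mul_nonneg (Real.exp_pos h).le (Finset.sum_nonneg fun k _ => deltaF_nonneg l r k)
  linarith

lemma gamma_min_exists (l r : ℕ → ℝ) (hl : ∀ n : ℕ, 1 ≤ n → 0 < l n)
    (n : ℕ) (hn : 1 ≤ n) (h : ℝ) (h0 : 0 ≤ h) :
    ∃ m₁ : ℕ, 1 ≤ m₁ ∧ ∀ m, 1 ≤ m → GammaF l r n m₁ h ≤ GammaF l r n m h := by
  set C : ℝ := max (GammaF l r n (n + 1) h) 0 with hC
  have hCge : GammaF l r n (n + 1) h ≤ C := le_max_left _ _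
  have hC0 : (0:ℝ) ≤ C := le_max_right _ _
  have L3 : ∃ M : ℕ, ∀ m, M ≤ m → C ≤ GammaF l r n m h := by
    by_cases hcase : ∃ M0 : ℕ, C + h ≤ ∑ k ∈ Finset.Icc n (M0 - 2), Real.exp (-l k)
    · obtain ⟨M0, hM0⟩ := hcase
      refine ⟨max M0 (n + 1), fun m hmm => ?_⟩
      have hm1 : n + 1 ≤ m := le_trans (le_max_right _ _) hmm
      have hm0 : M0 ≤ m := le_trans (le_max_left _ _) hmm
      have hS : ∑ k ∈ Finset.Icc n (M0 - 2), Real.exp (-l k) ≤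
          ∑ k ∈ Finset.Icc n (m - 2), Real.exp (-l k) :=
        Finset.sum_le_sum_of_subset_of_nonneg
          (Finset.Icc_subset_Icc le_rfl (by omega)) (fun k _ _ => (Real.exp_pos _).le)
      have hlb := gamma_lb l r n m h h0 hm1
      have hlmpos := hl m (by omega)
      have hmin : -h ≤ min (l m - h) 0 := le_min (by linarith) (by linarith)
      linarith
    · push_neg at hcase
      have hsum : ∀ J : ℕ, ∑ j ∈ Finset.range J, Real.exp (-l (n + j)) ≤ C + h := by
        intro J
        have he : ∑ j ∈ Finset.range J, Real.exp (-l (n + j)) =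
            ∑ k ∈ Finset.Icc n (n + J + 1 - 2), Real.exp (-l k) := by
          rw [show n + J + 1 - 2 = n + J - 1 from by omega, ← Finset.Ico_add_one_right_eq_Icc,
            show n + J - 1 + 1 = n + J from by omega, Finset.sum_Ico_eq_sum_range,
            show n + J - n = J from by omega]
        rw [he]
        exact (hcase (n + J + 1)).le
      have hsummable : Summable (fun j => Real.exp (-l (n + j))) :=
        summable_of_sum_range_le (fun j => (Real.exp_pos _).le) hsum
      have htend := hsummable.tendsto_atTop_zero
      have hev : ∀ᶠ j in Filter.atTop, Real.exp (-l (n + j)) < Real.exp (-(C + h)) :=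
        htend.eventually_lt_const (Real.exp_pos _)
      obtain ⟨J₀, hJ₀⟩ := Filter.eventually_atTop.mp hev
      refine ⟨n + J₀ + 1, fun m hmm => ?_⟩
      have hj := hJ₀ (m - n) (by omega)
      rw [show n + (m - n) = m from by omega] at hj
      have hlm : C + h < l m := by
        have := Real.exp_lt_exp.mp hj
        linarith
      have := gamma_lb2 l r n m h (by omega) (by linarith)
      linarith
  obtain ⟨M, hM⟩ := L3
  set M' := max M (n + 1) with hM'
  obtain ⟨m₁, hmem, hmin⟩ := Finset.exists_min_image (Finset.Icc 1 M')
    (fun m => GammaF l r n m h) ⟨n + 1, Finset.mem_Icc.mpr ⟨by omega, le_max_right _ _⟩⟩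
  refine ⟨m₁, (Finset.mem_Icc.mp hmem).1, fun m hm => ?_⟩
  by_cases hmM : m ≤ M'
  · exact hmin m (Finset.mem_Icc.mpr ⟨hm, hmM⟩)
  · have h1 : GammaF l r n m₁ h ≤ GammaF l r n (n + 1) h :=
      hmin (n + 1) (Finset.mem_Icc.mpr ⟨by omega, le_max_right _ _⟩)
    have h2 : C ≤ GammaF l r n m h := hM m (by omega)
    linarith
/-- For every integer `n ≥ 1` and every real `h` with `0 ≤ h ≤ l_n`, the infimum of
`Γ_{nm}(h)` over integers `m ≥ 1` is attained, and it equals the minimum of `Γ_{nm}(h)` over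
integers `m` with `A_n(h) ≤ m ≤ B_n(h)`. -/
theorem stmt2 (l r : ℕ → ℝ) (hl : ∀ n : ℕ, 1 ≤ n → 0 < l n) (hr : ∀ n : ℕ, 1 ≤ n → 0 ≤ r n)
    (n : ℕ) (hn : 1 ≤ n) (h : ℝ) (h0 : 0 ≤ h) (hln : h ≤ l n) :
    ∃ m₀ : ℕ, 1 ≤ m₀ ∧ AFun l n h ≤ m₀ ∧ (m₀ : ℕ∞) ≤ BFun l n h ∧
      ∀ m : ℕ, 1 ≤ m → GammaF l r n m₀ h ≤ GammaF l r n m h := by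
  set A := AFun l n h with hAdef
  have hbdd : BddAbove (({1} ∪ {m : ℕ | 1 ≤ m ∧ m < n ∧ l m ≤ h}) : Set ℕ) := by
    refine ⟨n, ?_⟩
    rintro x (hx | ⟨_, hx2, _⟩)
    · simp only [Set.mem_singleton_iff] at hx; omega
    · omega
  have hAset : A ∈ (({1} ∪ {m : ℕ | 1 ≤ m ∧ m < n ∧ l m ≤ h}) : Set ℕ) := by
    rw [hAdef, AFun]
    exact Nat.sSup_mem ⟨1, Or.inl rfl⟩ hbdd
  have hA1 : 1 ≤ A := by
    rcases hAset with h1 | ⟨h1, _, _⟩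
    · simp only [Set.mem_singleton_iff] at h1; omega
    · exact h1
  have hAn : A ≤ n := by
    rcases hAset with h1 | ⟨_, h2, _⟩
    · simp only [Set.mem_singleton_iff] at h1; omega
    · omega
  have hAB : (A : ℕ∞) ≤ BFun l n h := by
    refine le_sInf ?_
    rintro x ⟨m', rfl, hm1, -⟩
    exact_mod_cast (by omega : A ≤ m')
  obtain ⟨m₁, hm₁1, hm₁min⟩ := gamma_min_exists l r hl n hn h h0
  by_cases hcA : m₁ < A
  · have hAmem : 1 ≤ A ∧ A < n ∧ l A ≤ h := by
      rcases hAset with h1 | h2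
      · exfalso; simp only [Set.mem_singleton_iff] at h1; omega
      · exact h2
    exact ⟨A, hA1, le_refl _, hAB, fun m hm =>
      le_trans (gamma_left l r n A m₁ h h0 hAmem.2.2 hAmem.2.1 hcA) (hm₁min m hm)⟩
  · by_cases hcB : (m₁ : ℕ∞) ≤ BFun l n h
    · exact ⟨m₁, hm₁1, by omega, hcB, hm₁min⟩
    · push_neg at hcB
      have hTne : {m : ℕ | n < m ∧ l m ≤ h}.Nonempty := by
        by_contra hemp
        rw [Set.not_nonempty_iff_eq_empty] at hemp
        have hBtop : BFun l n h = ⊤ := by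
          rw [BFun]
          have hE : {x : ℕ∞ | ∃ m : ℕ, x = (m : ℕ∞) ∧ n < m ∧ l m ≤ h} = ∅ := by
            ext x
            simp only [Set.mem_setOf_eq, Set.mem_empty_iff_false, iff_false]
            rintro ⟨m', rfl, h1, h2⟩
            have : m' ∈ {m : ℕ | n < m ∧ l m ≤ h} := ⟨h1, h2⟩
            rw [hemp] at this
            exact this
          rw [hE, sInf_empty]
        rw [hBtop] at hcB
        exact not_top_lt hcB
      set b := sInf {m : ℕ | n < m ∧ l m ≤ h} with hbdef
      obtain ⟨hb1, hb2⟩ : n < b ∧ l b ≤ h := Nat.sInf_mem hTne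
      have hmemB : (b : ℕ∞) ∈ {x : ℕ∞ | ∃ m : ℕ, x = (m : ℕ∞) ∧ n < m ∧ l m ≤ h} :=
        ⟨b, rfl, hb1, hb2⟩
      have hBeq : BFun l n h = (b : ℕ∞) := by
        rw [BFun]
        refine le_antisymm (sInf_le hmemB) (le_sInf ?_)
        rintro x ⟨m', rfl, h1, h2⟩
        exact_mod_cast Nat.sInf_le (show m' ∈ {m : ℕ | n < m ∧ l m ≤ h} from ⟨h1, h2⟩)
      have hbm₁ : b < m₁ := by
        rw [hBeq] at hcB
        exact_mod_cast hcB
      exact ⟨b, by omega, by omega, hBeq.symm.le, fun m hm =>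
        le_trans (gamma_right l r n b m₁ h h0 hn hb2 hb1 hbm₁) (hm₁min m hm)⟩
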